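/- Let μ be a compactly supported probability measure on ℝ with Stieltjes transform G_μ(z) = ∫ (z - t)^{-1} dμ(t), and let ν be a compactly supported probability measure whose moments (ν_k) satisfy exp(Σ_{k≥0} μ_k z^{k+1}) = 1 + Σ_{k≥0} ν_k z^{k+1} as formal power series, where (μ_k) are the moments of μ. Then for |z| large, exp(G_μ(z)) = 1 + G_ν(z). -/

import Mathlib

open Finset PowerSeries MeasureTheory

lemma coeff_mul_w (f g : PowerSeries ℝ) (w : ℝ) (n : ℕ) :
    PowerSeries.coeff n (f * g) * w ^ n =
    ∑ kl ∈ Finset.HasAntidiagonal.antidiagonal n,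
      (PowerSeries.coeff kl.1 f * w ^ kl.1) * (PowerSeries.coeff kl.2 g * w ^ kl.2) := by
  rw [PowerSeries.coeff_mul, Finset.sum_mul]
  refine Finset.sum_congr rfl fun kl hkl => ?_
  rw [Finset.HasAntidiagonal.mem_antidiagonal] at hkl
  rw [← hkl, pow_add]; ring

lemma tsum_coeff_mul {f g : PowerSeries ℝ} {w : ℝ}
    (hf : Summable fun n => ‖PowerSeries.coeff n f * w ^ n‖)
    (hg : Summable fun n => ‖PowerSeries.coeff n g * w ^ n‖) :
    (∑' n, PowerSeries.coeff n f * w ^ n) * (∑' n, PowerSeries.coeff n g * w ^ n)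
      = ∑' n, PowerSeries.coeff n (f * g) * w ^ n := by
  rw [tsum_mul_tsum_eq_tsum_sum_antidiagonal_of_summable_norm hf hg]
  exact tsum_congr fun n => (coeff_mul_w f g w n).symm

lemma norm_coeff_mul_le {f g : PowerSeries ℝ} {w : ℝ}
    (hf : Summable fun n => ‖PowerSeries.coeff n f * w ^ n‖)
    (hg : Summable fun n => ‖PowerSeries.coeff n g * w ^ n‖) :
    Summable (fun n => ‖PowerSeries.coeff n (f * g) * w ^ n‖) ∧
    ∑' n, ‖PowerSeries.coeff n (f * g) * w ^ n‖ ≤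
      (∑' n, ‖PowerSeries.coeff n f * w ^ n‖) * (∑' n, ‖PowerSeries.coeff n g * w ^ n‖) := by
  set F := fun n => ‖PowerSeries.coeff n f * w ^ n‖ with hF
  set G := fun n => ‖PowerSeries.coeff n g * w ^ n‖ with hG
  have hFn : Summable fun n => ‖F n‖ := by simpa [hF] using hf
  have hGn : Summable fun n => ‖G n‖ := by simpa [hG] using hg
  have hsum : Summable fun n => ∑ kl ∈ Finset.HasAntidiagonal.antidiagonal n, F kl.1 * G kl.2 :=
    summable_sum_mul_antidiagonal_of_summable_mul
      (Summable.mul_of_nonneg hf hg (fun _ => norm_nonneg _) fun _ => norm_nonneg _)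
  have hle : ∀ n, ‖PowerSeries.coeff n (f * g) * w ^ n‖ ≤
      ∑ kl ∈ Finset.HasAntidiagonal.antidiagonal n, F kl.1 * G kl.2 := by
    intro n
    rw [coeff_mul_w]
    refine (norm_sum_le _ _).trans ?_
    refine Finset.sum_le_sum fun kl _ => ?_
    rw [norm_mul]
  have hs : Summable (fun n => ‖PowerSeries.coeff n (f * g) * w ^ n‖) :=
    hsum.of_nonneg_of_le (fun _ => norm_nonneg _) hle
  refine ⟨hs, ?_⟩
  calc ∑' n, ‖PowerSeries.coeff n (f * g) * w ^ n‖
      ≤ ∑' n, ∑ kl ∈ Finset.HasAntidiagonal.antidiagonal n, F kl.1 * G kl.2 := Summable.tsum_le_tsum hle hs hsum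
    _ = (∑' n, F n) * (∑' n, G n) :=
      (tsum_mul_tsum_eq_tsum_sum_antidiagonal_of_summable_norm hFn hGn).symm

lemma pow_lemma (f : PowerSeries ℝ) (w : ℝ)
    (hf : Summable fun n => ‖PowerSeries.coeff n f * w ^ n‖) (k : ℕ) :
    Summable (fun n => ‖PowerSeries.coeff n (f ^ k) * w ^ n‖) ∧
    ∑' n, ‖PowerSeries.coeff n (f ^ k) * w ^ n‖ ≤
      (∑' n, ‖PowerSeries.coeff n f * w ^ n‖) ^ k ∧
    ∑' n, PowerSeries.coeff n (f ^ k) * w ^ n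
      = (∑' n, PowerSeries.coeff n f * w ^ n) ^ k := by
  induction k with
  | zero =>
    have h1 : ∀ n, PowerSeries.coeff n ((f : PowerSeries ℝ) ^ 0) * w ^ n
        = if n = 0 then 1 else 0 := by
      intro n
      rcases Nat.eq_zero_or_pos n with h | h
      · subst h; simp
      · simp [pow_zero, PowerSeries.coeff_one, Nat.pos_iff_ne_zero.mp h]
    have hsup : ∀ n ∉ ({0} : Finset ℕ), PowerSeries.coeff n ((f : PowerSeries ℝ) ^ 0) * w ^ n = 0 := by
      intro n hn
      simp only [Finset.mem_singleton] at hn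
      simp [h1, hn]
    have hs : Summable (fun n => ‖PowerSeries.coeff n (f ^ 0) * w ^ n‖) :=
      summable_of_ne_finset_zero (s := {0}) (fun n hn => by rw [hsup n hn, norm_zero])
    have ht : ∑' n, PowerSeries.coeff n (f ^ 0) * w ^ n = 1 := by
      rw [tsum_eq_sum hsup]; simp [h1]
    have ht' : ∑' n, ‖PowerSeries.coeff n (f ^ 0) * w ^ n‖ = 1 := by
      rw [tsum_eq_sum (s := {0}) (fun n hn => by rw [hsup n hn, norm_zero])]
      simp [h1]
    exact ⟨hs, by rw [ht']; simp, by rw [ht]; simp⟩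
  | succ k ih =>
    obtain ⟨hs, hb, he⟩ := ih
    have h1 := norm_coeff_mul_le (f := f ^ k) (g := f) hs hf
    have hpow : (f : PowerSeries ℝ) ^ (k + 1) = f ^ k * f := pow_succ f k
    refine ⟨by rw [hpow]; exact h1.1, ?_, ?_⟩
    · rw [hpow, pow_succ]
      refine h1.2.trans ?_
      exact mul_le_mul_of_nonneg_right hb (tsum_nonneg fun n => norm_nonneg _)
    · rw [hpow, ← tsum_coeff_mul hs hf, he, pow_succ]

/-- Exponential of a formal power series (with zero constant term). -/
noncomputable def expPS (f : PowerSeries ℝ) : PowerSeries ℝ :=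
  PowerSeries.mk fun n =>
    ∑ k ∈ Finset.range (n + 1), PowerSeries.coeff n (f ^ k) / (Nat.factorial k : ℝ)

/-- `Σ_{k≥0} μ_k z^{k+1}` as a formal power series. -/
noncomputable def seriesOf (μ : ℕ → ℝ) : PowerSeries ℝ :=
  PowerSeries.mk fun n => if n = 0 then 0 else μ (n - 1)

lemma coeff_pow_eq_zero {f : PowerSeries ℝ} (hf0 : PowerSeries.constantCoeff f = 0) :
    ∀ k n : ℕ, n < k → PowerSeries.coeff n (f ^ k) = 0 := by
  intro k
  induction k with
  | zero => intro n hn; omega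
  | succ k ih =>
    intro n hn
    rw [pow_succ, PowerSeries.coeff_mul]
    refine Finset.sum_eq_zero fun kl hkl => ?_
    rw [Finset.HasAntidiagonal.mem_antidiagonal] at hkl
    rcases Nat.eq_zero_or_pos kl.2 with h | h
    · rw [h, PowerSeries.coeff_zero_eq_constantCoeff, hf0, mul_zero]
    · have : kl.1 < k := by omega
      rw [ih kl.1 this, zero_mul]

lemma exp_tsum_coeff (f : PowerSeries ℝ) (hf0 : PowerSeries.constantCoeff f = 0) (w : ℝ)
    (hf : Summable fun n => ‖PowerSeries.coeff n f * w ^ n‖) :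
    Real.exp (∑' n, PowerSeries.coeff n f * w ^ n)
      = ∑' n, PowerSeries.coeff n (expPS f) * w ^ n ∧
    Summable (fun n => PowerSeries.coeff n (expPS f) * w ^ n) := by
  classical
  set S := ∑' n, ‖PowerSeries.coeff n f * w ^ n‖ with hS
  set h : ℕ × ℕ → ℝ := fun p => PowerSeries.coeff p.2 (f ^ p.1) * w ^ p.2 / (Nat.factorial p.1 : ℝ)
    with hdef
  have hfac : ∀ k : ℕ, (0:ℝ) < (Nat.factorial k : ℝ) := fun k => by
    exact_mod_cast Nat.factorial_pos k
  have hnorm : ∀ p : ℕ × ℕ, ‖h p‖ =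
      ‖PowerSeries.coeff p.2 (f ^ p.1) * w ^ p.2‖ / (Nat.factorial p.1 : ℝ) := by
    intro p
    rw [hdef]
    rw [norm_div, Real.norm_eq_abs (Nat.factorial p.1 : ℝ), abs_of_pos (hfac p.1)]
  have hrow : ∀ k : ℕ, Summable fun n => ‖h (k, n)‖ := by
    intro k
    have := ((pow_lemma f w hf k).1).div_const (Nat.factorial k : ℝ)
    refine this.congr fun n => ?_
    rw [hnorm]
  have hrowsum : ∀ k : ℕ, ∑' n, ‖h (k, n)‖ ≤ S ^ k / (Nat.factorial k : ℝ) := by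
    intro k
    have he : ∑' n, ‖h (k, n)‖
        = (∑' n, ‖PowerSeries.coeff n (f ^ k) * w ^ n‖) / (Nat.factorial k : ℝ) := by
      rw [← tsum_div_const]
      exact tsum_congr fun n => hnorm (k, n)
    rw [he]
    exact div_le_div_of_nonneg_right ((pow_lemma f w hf k).2.1) (hfac k).le
  have habs : Summable fun p : ℕ × ℕ => ‖h p‖ := by
    rw [summable_prod_of_nonneg (fun p => norm_nonneg _)]
    refine ⟨hrow, ?_⟩
    refine Summable.of_nonneg_of_le (fun k => tsum_nonneg fun n => norm_nonneg _) hrowsum ?_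
    exact Real.summable_pow_div_factorial S
  have hh : Summable h := habs.of_norm
  -- inner sum over k for fixed n
  have hinner : ∀ n : ℕ, ∑' k, h (k, n) = PowerSeries.coeff n (expPS f) * w ^ n := by
    intro n
    have hvan : ∀ k ∉ Finset.range (n + 1), h (k, n) = 0 := by
      intro k hk
      rw [Finset.mem_range, not_lt] at hk
      have : n < k := hk
      rw [hdef]
      simp only
      rw [coeff_pow_eq_zero hf0 k n this, zero_mul, zero_div]
    rw [tsum_eq_sum hvan]
    rw [expPS, PowerSeries.coeff_mk, Finset.sum_mul]
    refine Finset.sum_congr rfl fun k _ => ?_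
    rw [hdef]; ring
  have hXk : ∀ k : ℕ, (∑' n, PowerSeries.coeff n f * w ^ n) ^ k / (Nat.factorial k : ℝ)
      = ∑' n, h (k, n) := by
    intro k
    rw [← (pow_lemma f w hf k).2.2, ← tsum_div_const]
  have hexp : Real.exp (∑' n, PowerSeries.coeff n f * w ^ n)
      = ∑' k, ∑' n, h (k, n) := by
    rw [Real.exp_eq_exp_ℝ, NormedSpace.exp_eq_tsum_div]
    exact tsum_congr hXk
  have hswap : ∑' k, ∑' n, h (k, n) = ∑' n, ∑' k, h (k, n) := by
    have h1 : ∑' p : ℕ × ℕ, h p = ∑' k, ∑' n, h (k, n) := Summable.tsum_prod hh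
    have h2 : ∑' n, ∑' k, h (k, n) = ∑' k, ∑' n, h (k, n) :=
      Summable.tsum_comm (f := fun k n => h (k, n)) hh
    rw [← h2]
  have hsummable : Summable fun n => PowerSeries.coeff n (expPS f) * w ^ n := by
    have : Summable fun n => ∑' k, h (k, n) := by
      have := (habs.of_norm).prod_symm.prod
      exact this.congr fun n => rfl
    exact this.congr hinner
  refine ⟨?_, hsummable⟩
  rw [hexp, hswap]
  exact tsum_congr hinner


lemma ae_abs_le (μ : Measure ℝ) {M : ℝ} (hM : μ {x : ℝ | M < |x|} = 0) :
    ∀ᵐ t ∂μ, |t| ≤ M := by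
  rw [ae_iff]
  simpa [not_le] using hM

lemma moment_integrable (μ : Measure ℝ) [IsProbabilityMeasure μ] {M : ℝ}
    (hM : μ {x : ℝ | M < |x|} = 0) (k : ℕ) :
    Integrable (fun t : ℝ => t ^ k) μ := by
  refine Integrable.mono' (integrable_const (M ^ k)) ?_ ?_
  · exact (continuous_pow k).aestronglyMeasurable
  · filter_upwards [ae_abs_le μ hM] with t ht
    rw [Real.norm_eq_abs, abs_pow]
    exact pow_le_pow_left₀ (abs_nonneg t) ht k

lemma moment_bound (μ : Measure ℝ) [IsProbabilityMeasure μ] {M : ℝ} (hM0 : 0 ≤ M)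
    (hM : μ {x : ℝ | M < |x|} = 0) (k : ℕ) :
    |∫ t, t ^ k ∂μ| ≤ M ^ k := by
  have habs := norm_integral_le_integral_norm (μ := μ) (fun t : ℝ => t ^ k)
  simp only [Real.norm_eq_abs] at habs
  refine habs.trans ?_
  have h1 : ∫ t, |t ^ k| ∂μ ≤ ∫ _t, M ^ k ∂μ := by
    refine integral_mono_ae ((moment_integrable μ hM k).abs) (integrable_const _) ?_
    filter_upwards [ae_abs_le μ hM] with t ht
    rw [abs_pow]
    exact pow_le_pow_left₀ (abs_nonneg t) ht k
  simpa using h1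

lemma integral_abs_pow_le (μ : Measure ℝ) [IsProbabilityMeasure μ] {M : ℝ}
    (hM : μ {x : ℝ | M < |x|} = 0) (k : ℕ) :
    ∫ t, |t| ^ k ∂μ ≤ M ^ k := by
  have h1 : ∫ t, |t| ^ k ∂μ ≤ ∫ _t, M ^ k ∂μ := by
    refine integral_mono_ae ?_ (integrable_const _) ?_
    · have := (moment_integrable μ hM k).abs
      refine this.congr ?_
      filter_upwards with t
      rw [abs_pow]
    · filter_upwards [ae_abs_le μ hM] with t ht
      exact pow_le_pow_left₀ (abs_nonneg t) ht k
  simpa using h1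

lemma stieltjes_expand (μ : Measure ℝ) [IsProbabilityMeasure μ] {M z : ℝ} (hM0 : 0 ≤ M)
    (hM : μ {x : ℝ | M < |x|} = 0) (hz : M < |z|) :
    ∫ t, (z - t)⁻¹ ∂μ = ∑' k, (∫ t, t ^ k ∂μ) * z⁻¹ ^ (k + 1) := by
  have hz0 : z ≠ 0 := by
    intro h; rw [h, abs_zero] at hz; exact absurd hz (not_lt.mpr hM0)
  have hzpos : (0:ℝ) < |z| := lt_of_le_of_lt hM0 hz
  set F : ℕ → ℝ → ℝ := fun k t => t ^ k * z⁻¹ ^ (k + 1) with hFdef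
  have hint : ∀ k, Integrable (F k) μ := fun k =>
    (moment_integrable μ hM k).mul_const _
  have hbound : ∀ k, ∫ t, ‖F k t‖ ∂μ ≤ M ^ k * |z|⁻¹ ^ (k + 1) := by
    intro k
    have : ∀ t : ℝ, ‖F k t‖ = |t| ^ k * |z|⁻¹ ^ (k + 1) := by
      intro t
      rw [hFdef]
      simp [abs_mul, abs_pow, abs_inv]
    simp_rw [this]
    rw [integral_mul_const]
    exact mul_le_mul_of_nonneg_right (integral_abs_pow_le μ hM k)
      (pow_nonneg (inv_nonneg.mpr (abs_nonneg z)) _)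
  have hsummable : Summable fun k => ∫ t, ‖F k t‖ ∂μ := by
    refine Summable.of_nonneg_of_le
      (fun k => integral_nonneg fun t => norm_nonneg _) hbound ?_
    have hr : M * |z|⁻¹ < 1 := by
      rw [mul_inv_lt_iff₀ hzpos, one_mul]; exact hz
    have hgeo : Summable fun k : ℕ => |z|⁻¹ * (M * |z|⁻¹) ^ k :=
      (summable_geometric_of_lt_one (by positivity) hr).mul_left _
    refine hgeo.congr fun k => ?_
    rw [mul_pow, pow_succ]; ring
  have h_ae : ∀ᵐ t ∂μ, (z - t)⁻¹ = ∑' k, F k t := by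
    filter_upwards [ae_abs_le μ hM] with t ht
    have hlt : ‖t * z⁻¹‖ < 1 := by
      rw [norm_mul, Real.norm_eq_abs, Real.norm_eq_abs, abs_inv]
      calc |t| * |z|⁻¹ ≤ M * |z|⁻¹ :=
        mul_le_mul_of_nonneg_right ht (inv_nonneg.mpr (abs_nonneg z))
      _ < 1 := by rw [mul_inv_lt_iff₀ hzpos, one_mul]; exact hz
    have h1 : ∑' k, F k t = z⁻¹ * ∑' k, (t * z⁻¹) ^ k := by
      rw [← tsum_mul_left]
      refine tsum_congr fun k => ?_
      simp only [hFdef, mul_pow, pow_succ]; ring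
    rw [h1, tsum_geometric_of_norm_lt_one hlt, ← mul_inv]
    congr 1
    field_simp
  calc ∫ t, (z - t)⁻¹ ∂μ = ∫ t, ∑' k, F k t ∂μ := integral_congr_ae h_ae
    _ = ∑' k, ∫ t, F k t ∂μ :=
      (integral_tsum_of_summable_integral_norm hint hsummable).symm
    _ = ∑' k, (∫ t, t ^ k ∂μ) * z⁻¹ ^ (k + 1) := by
      refine tsum_congr fun k => ?_
      rw [hFdef]
      exact integral_mul_const _ _
theorem markov_krein_stieltjes (μ ν : Measure ℝ)
    [IsProbabilityMeasure μ] [IsProbabilityMeasure ν]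
    (hμ : ∃ M : ℝ, μ {x : ℝ | M < |x|} = 0) (hν : ∃ M : ℝ, ν {x : ℝ | M < |x|} = 0)
    (hrel : expPS (seriesOf fun k => ∫ t, t ^ k ∂μ) =
      1 + seriesOf fun k => ∫ t, t ^ k ∂ν) :
    ∃ R : ℝ, ∀ z : ℝ, R < |z| →
      Real.exp (∫ t, (z - t)⁻¹ ∂μ) = 1 + ∫ t, (z - t)⁻¹ ∂ν := by
  obtain ⟨Mμ, hMμ⟩ := hμ
  obtain ⟨Mν, hMν⟩ := hν
  set M : ℝ := max |Mμ| |Mν| with hMdef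
  have hM0 : 0 ≤ M := le_trans (abs_nonneg Mμ) (le_max_left _ _)
  have hμ' : μ {x : ℝ | M < |x|} = 0 := by
    refine measure_mono_null ?_ hMμ
    intro x hx
    exact lt_of_le_of_lt ((le_abs_self Mμ).trans (le_max_left _ _)) hx
  have hν' : ν {x : ℝ | M < |x|} = 0 := by
    refine measure_mono_null ?_ hMν
    intro x hx
    exact lt_of_le_of_lt ((le_abs_self Mν).trans (le_max_right _ _)) hx
  refine ⟨M + 1, fun z hz => ?_⟩
  have hzM : M < |z| := lt_of_le_of_lt (le_add_of_nonneg_right zero_le_one) hz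
  have hzpos : (0:ℝ) < |z| := lt_of_le_of_lt hM0 hzM
  set a : ℕ → ℝ := fun k => ∫ t, t ^ k ∂μ with hadef
  set b : ℕ → ℝ := fun k => ∫ t, t ^ k ∂ν with hbdef
  set f : PowerSeries ℝ := seriesOf a with hfdef
  have hcoefff : ∀ n, PowerSeries.coeff n f = if n = 0 then 0 else a (n - 1) := by
    intro n; rw [hfdef, seriesOf, PowerSeries.coeff_mk]
  have hf0 : PowerSeries.constantCoeff f = 0 := by
    rw [← PowerSeries.coeff_zero_eq_constantCoeff, hcoefff]; simp
  have hr : M * |z|⁻¹ < 1 := by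
    rw [mul_inv_lt_iff₀ hzpos, one_mul]; exact hzM
  have hgeo : Summable fun k : ℕ => |z|⁻¹ * (M * |z|⁻¹) ^ k :=
    (summable_geometric_of_lt_one (by positivity) hr).mul_left _
  have hfs : Summable fun n => ‖PowerSeries.coeff n f * (z⁻¹) ^ n‖ := by
    rw [← summable_nat_add_iff 1]
    refine Summable.of_nonneg_of_le (fun n => norm_nonneg _) ?_ hgeo
    intro n
    rw [hcoefff]
    simp only [Nat.add_sub_cancel, Nat.succ_ne_zero, if_false]
    rw [norm_mul, Real.norm_eq_abs, Real.norm_eq_abs, abs_pow, abs_inv]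
    calc |a n| * |z|⁻¹ ^ (n + 1)
        ≤ M ^ n * |z|⁻¹ ^ (n + 1) :=
          mul_le_mul_of_nonneg_right (moment_bound μ hM0 hμ' n)
            (pow_nonneg (inv_nonneg.mpr (abs_nonneg z)) _)
      _ = |z|⁻¹ * (M * |z|⁻¹) ^ n := by rw [mul_pow, pow_succ]; ring
  obtain ⟨hexp, hsum⟩ := exp_tsum_coeff f hf0 z⁻¹ hfs
  have hcoeffe : ∀ n, PowerSeries.coeff n (expPS f) =
      (if n = 0 then 1 else 0) + (if n = 0 then 0 else b (n - 1)) := by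
    intro n
    rw [hfdef, hadef, hrel]
    rw [map_add, PowerSeries.coeff_one, seriesOf, PowerSeries.coeff_mk]
  have hGμ : ∫ t, (z - t)⁻¹ ∂μ = ∑' n, PowerSeries.coeff n f * (z⁻¹) ^ n := by
    have htail : ∑' n, PowerSeries.coeff n f * (z⁻¹) ^ n
        = ∑' k, a k * (z⁻¹) ^ (k + 1) := by
      rw [Summable.tsum_eq_zero_add hfs.of_norm]
      have h0 : PowerSeries.coeff 0 f * (z⁻¹ : ℝ) ^ 0 = 0 := by rw [hcoefff]; simp
      rw [h0, zero_add]
      exact tsum_congr fun n => by rw [hcoefff]; simp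
    rw [htail, stieltjes_expand μ hM0 hμ' hzM]
  have hGν : ∑' n, PowerSeries.coeff n (expPS f) * (z⁻¹) ^ n
      = 1 + ∫ t, (z - t)⁻¹ ∂ν := by
    rw [Summable.tsum_eq_zero_add hsum, stieltjes_expand ν hM0 hν' hzM]
    congr 1
    · rw [hcoeffe]; simp
    · exact tsum_congr fun n => by rw [hcoeffe]; simp [hbdef]
  rw [hGμ, hexp, hGν]
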